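/- arXiv:2001.00653 — 3 statements merged into one kernel-verified Lean document; each statement's English description precedes it below -/
import Mathlib

section
/- For every integer d ≥ 1 and real λ > 0, (2(1+λ)^d - (1+λ))((1+2λ)^d + (1+λ)^d) < (3(1+2λ)^d - (1+2λ))(1+λ)^d. -/
lemma aux_two_pow (d : ℕ) (lam : ℝ) (hlam : 0 < lam) :
    2 * (1 + lam) ^ d ≤ (1 + 2 * lam) ^ d + 1 := by
  induction d with
  | zero => norm_num
  | succ n ih =>
    have hB : (1:ℝ) ≤ (1 + 2 * lam) ^ n :=
      one_le_pow₀ (by linarith)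
    have h1 : 2 * (1 + lam) ^ (n + 1) ≤ ((1 + 2 * lam) ^ n + 1) * (1 + lam) := by
      rw [pow_succ]
      have := mul_le_mul_of_nonneg_right ih (by linarith : (0:ℝ) ≤ 1 + lam)
      linarith
    have h2 : ((1 + 2 * lam) ^ n + 1) * (1 + lam)
        ≤ (1 + 2 * lam) ^ (n + 1) + 1 := by
      rw [pow_succ]
      nlinarith
    linarith

theorem stmt_5 (d : ℕ) (hd : 1 ≤ d) (lam : ℝ) (hlam : 0 < lam) :
    (2 * (1 + lam) ^ d - (1 + lam)) * ((1 + 2 * lam) ^ d + (1 + lam) ^ d)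
      < (3 * (1 + 2 * lam) ^ d - (1 + 2 * lam)) * (1 + lam) ^ d := by
  set A := (1 + lam) ^ d with hA
  set B := (1 + 2 * lam) ^ d with hB
  have hAB : A < B := by
    apply pow_lt_pow_left₀ (by linarith) (by linarith)
    omega
  have hApos : (0:ℝ) < A := pow_pos (by linarith) d
  have key : 2 * A ≤ B + 1 := aux_two_pow d lam hlam
  nlinarith [mul_le_mul_of_nonneg_right key (le_of_lt hApos)]
end

section
/- Let r ≥ 3 and let d > r be prime. Define the hypergraph H(r,d) with vertex set V = V_1 ∪ ... ∪ V_r, disjoint copies of Z/dZ, and edges all r-tuples (x_1,...,x_r) with x_i ∈ V_i satisfying x_k ≡ x_1 + (k−2)x_2 (mod d) for all 3 ≤ k ≤ r. Then H(r,d) is an r-uniform, d-regular, linear hypergraph on rd vertices. -/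
/-- The `r`-partite hypergraph `H(r,d)`: parts are `r` disjoint copies of `ZMod d`,
and the edges are all `r`-tuples `(x₁, …, x_r)` with `x_k = x₁ + (k-2)·x₂` for
`3 ≤ k ≤ r` (with 1-based part index `k = i + 1` for `i : Fin r`). -/
def Hrd (r d : ℕ) [NeZero d] : Finset (Finset (Fin r × ZMod d)) :=
  (Finset.univ : Finset (ZMod d × ZMod d)).image
    (fun x => Finset.univ.image (fun i : Fin r =>
      (i, if i.val = 0 then x.1 else if i.val = 1 then x.2
          else x.1 + ((i.val - 1 : ℕ) : ZMod d) * x.2)))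

/-- The coordinate of the edge indexed by `x` in part `i`. -/
def crd {r : ℕ} (d : ℕ) [NeZero d] (x : ZMod d × ZMod d) (i : Fin r) : ZMod d :=
  if i.val = 0 then x.1 else if i.val = 1 then x.2
    else x.1 + ((i.val - 1 : ℕ) : ZMod d) * x.2

/-- The edge indexed by `x`. -/
def fE (r d : ℕ) [NeZero d] (x : ZMod d × ZMod d) : Finset (Fin r × ZMod d) :=
  Finset.univ.image (fun i : Fin r => (i, crd d x i))

lemma Hrd_eq (r d : ℕ) [NeZero d] :
    Hrd r d = (Finset.univ : Finset (ZMod d × ZMod d)).image (fE r d) := rfl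

lemma mem_fE {r d : ℕ} [NeZero d] (x : ZMod d × ZMod d) (v : Fin r × ZMod d) :
    v ∈ fE r d x ↔ v.2 = crd d x v.1 := by
  simp only [fE, Finset.mem_image, Finset.mem_univ, true_and]
  constructor
  · rintro ⟨i, hi⟩
    obtain ⟨rfl, h⟩ := Prod.mk.injEq .. ▸ hi
    exact h.symm
  · intro h
    exact ⟨v.1, by rw [← h]⟩

lemma fE_injective (r d : ℕ) [NeZero d] (hr : 2 ≤ r) :
    Function.Injective (fE r d) := by
  intro x y h
  have h0 : (⟨(⟨0, by omega⟩ : Fin r), x.1⟩ : Fin r × ZMod d) ∈ fE r d y := by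
    rw [← h, mem_fE]; simp [crd]
  have h1 : (⟨(⟨1, by omega⟩ : Fin r), x.2⟩ : Fin r × ZMod d) ∈ fE r d y := by
    rw [← h, mem_fE]; simp [crd]
  rw [mem_fE] at h0 h1
  simp only [crd] at h0 h1
  exact Prod.ext (by simpa using h0) (by simpa using h1)

lemma count_lin {d : ℕ} [NeZero d] (c a : ZMod d) :
    (Finset.univ.filter (fun x : ZMod d × ZMod d => x.1 + c * x.2 = a)).card = d := by
  conv_rhs => rw [← ZMod.card d, ← Finset.card_univ]
  refine Finset.card_bij' (fun x _ => x.2) (fun t _ => (a - c * t, t)) ?_ ?_ ?_ ?_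
  · intros; exact Finset.mem_univ _
  · intro t _; simp [Finset.mem_filter]
  · intro x hx
    simp only [Finset.mem_filter, Finset.mem_univ, true_and] at hx
    ext <;> simp [← hx]
  · intros; rfl

lemma count_snd {d : ℕ} [NeZero d] (a : ZMod d) :
    (Finset.univ.filter (fun x : ZMod d × ZMod d => x.2 = a)).card = d := by
  conv_rhs => rw [← ZMod.card d, ← Finset.card_univ]
  refine Finset.card_bij' (fun x _ => x.1) (fun t _ => (t, a)) ?_ ?_ ?_ ?_
  · intros; exact Finset.mem_univ _
  · intro t _
    simp only [Finset.mem_filter, Finset.mem_univ, true_and]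
  · intro x hx
    simp only [Finset.mem_filter, Finset.mem_univ, true_and] at hx
    simp [Prod.ext_iff, hx]
  · intros; rfl

lemma count_crd {r d : ℕ} [NeZero d] (i : Fin r) (a : ZMod d) :
    (Finset.univ.filter (fun x : ZMod d × ZMod d => crd d x i = a)).card = d := by
  rcases Nat.lt_or_ge i.val 2 with h2 | h2
  · interval_cases h : i.val
    · have : ∀ x : ZMod d × ZMod d, crd d x i = x.1 := by intro x; simp [crd, h]
      simp only [this]
      have := count_lin (d := d) 0 a
      simpa using this
    · have : ∀ x : ZMod d × ZMod d, crd d x i = x.2 := by intro x; simp [crd, h]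
      simp only [this]
      exact count_snd a
  · have : ∀ x : ZMod d × ZMod d,
        crd d x i = x.1 + ((i.val - 1 : ℕ) : ZMod d) * x.2 := by
      intro x; rw [crd, if_neg (by omega), if_neg (by omega)]
    simp only [this]
    exact count_lin _ a

lemma natCast_ne {d : ℕ} [NeZero d] {m n : ℕ} (hm : m < d) (hn : n < d) (hmn : m ≠ n) :
    (m : ZMod d) ≠ (n : ZMod d) := by
  intro h
  have := congrArg ZMod.val h
  rw [ZMod.val_natCast_of_lt hm, ZMod.val_natCast_of_lt hn] at this
  exact hmn this

lemma crd_inj {r d : ℕ} [NeZero d] (hd : d.Prime) (hrd : r < d)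
    {x y : ZMod d × ZMod d} {i j : Fin r} (hij : i.val < j.val)
    (h1 : crd d x i = crd d y i) (h2 : crd d x j = crd d y j) : x = y := by
  haveI := Fact.mk hd
  rcases Nat.lt_or_ge i.val 1 with hi1 | hi1
  · -- i.val = 0
    have hi0 : i.val = 0 := by omega
    rw [crd, if_pos hi0, crd, if_pos hi0] at h1
    rcases Nat.lt_or_ge j.val 2 with hj2 | hj2
    · have hj1 : j.val = 1 := by omega
      rw [crd, if_neg (by omega), if_pos hj1, crd, if_neg (by omega), if_pos hj1] at h2
      exact Prod.ext h1 h2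
    · have hj0 : j.val ≠ 0 := by omega
      have hj1 : j.val ≠ 1 := by omega
      rw [crd, if_neg hj0, if_neg hj1, crd, if_neg hj0, if_neg hj1] at h2
      rw [h1] at h2
      have hc : ((j.val - 1 : ℕ) : ZMod d) ≠ 0 := by
        have := natCast_ne (d := d) (m := j.val - 1) (n := 0)
          (by omega) (by omega) (by omega)
        simpa using this
      have := mul_left_cancel₀ hc (add_left_cancel h2)
      exact Prod.ext h1 this
  · rcases Nat.lt_or_ge i.val 2 with hi2 | hi2
    · -- i.val = 1, j.val ≥ 2
      have hi1' : i.val = 1 := by omega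
      have hj0 : j.val ≠ 0 := by omega
      have hj1 : j.val ≠ 1 := by omega
      rw [crd, if_neg (by omega), if_pos hi1', crd, if_neg (by omega), if_pos hi1'] at h1
      rw [crd, if_neg hj0, if_neg hj1, crd, if_neg hj0, if_neg hj1] at h2
      rw [h1] at h2
      have := add_right_cancel h2
      exact Prod.ext this h1
    · -- i.val ≥ 2, j.val ≥ 2
      have hi0 : i.val ≠ 0 := by omega
      have hi1' : i.val ≠ 1 := by omega
      have hj0 : j.val ≠ 0 := by omega
      have hj1 : j.val ≠ 1 := by omega
      rw [crd, if_neg hi0, if_neg hi1', crd, if_neg hi0, if_neg hi1'] at h1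
      rw [crd, if_neg hj0, if_neg hj1, crd, if_neg hj0, if_neg hj1] at h2
      have hc : ((j.val - 1 : ℕ) : ZMod d) - ((i.val - 1 : ℕ) : ZMod d) ≠ 0 := by
        have := natCast_ne (d := d) (m := j.val - 1) (n := i.val - 1)
          (by omega) (by omega) (by omega)
        exact sub_ne_zero_of_ne (Ne.symm this).symm
      have hsub : (((j.val - 1 : ℕ) : ZMod d) - ((i.val - 1 : ℕ) : ZMod d)) * x.2 =
          (((j.val - 1 : ℕ) : ZMod d) - ((i.val - 1 : ℕ) : ZMod d)) * y.2 := by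
        have := congrArg₂ (· - ·) h2 h1
        ring_nf at this ⊢
        linear_combination this
      have h22 : x.2 = y.2 := mul_left_cancel₀ hc hsub
      rw [h22] at h1
      exact Prod.ext (add_right_cancel h1) h22

theorem stmt_12 (r d : ℕ) (hr : 3 ≤ r) (hd : d.Prime) (hrd : r < d) [NeZero d] :
    Fintype.card (Fin r × ZMod d) = r * d ∧
    (∀ e ∈ Hrd r d, e.card = r) ∧
    (∀ v : Fin r × ZMod d, ((Hrd r d).filter (fun e => v ∈ e)).card = d) ∧
    (∀ u v : Fin r × ZMod d, u ≠ v →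
      ((Hrd r d).filter (fun e => u ∈ e ∧ v ∈ e)).card ≤ 1) := by
  have hinj : Function.Injective (fE r d) := fE_injective r d (by omega)
  refine ⟨by simp [ZMod.card], ?_, ?_, ?_⟩
  · -- uniformity
    intro e he
    rw [Hrd_eq, Finset.mem_image] at he
    obtain ⟨x, -, rfl⟩ := he
    rw [fE, Finset.card_image_of_injective _ (fun a b h => (Prod.mk.injEq .. ▸ h).1)]
    simp
  · -- regularity
    intro v
    have hset : (Hrd r d).filter (fun e => v ∈ e) =
        (Finset.univ.filter (fun x => crd d x v.1 = v.2)).image (fE r d) := by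
      ext e
      simp only [Hrd_eq, Finset.mem_filter, Finset.mem_image, Finset.mem_univ, true_and]
      constructor
      · rintro ⟨⟨x, rfl⟩, hv⟩
        exact ⟨x, ((mem_fE x v).mp hv).symm, rfl⟩
      · rintro ⟨x, hx, rfl⟩
        exact ⟨⟨x, rfl⟩, (mem_fE x v).mpr hx.symm⟩
    rw [hset, Finset.card_image_of_injective _ hinj, count_crd]
  · -- linearity
    intro u v huv
    have hset : (Hrd r d).filter (fun e => u ∈ e ∧ v ∈ e) =
        (Finset.univ.filter
          (fun x => crd d x u.1 = u.2 ∧ crd d x v.1 = v.2)).image (fE r d) := by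
      ext e
      simp only [Hrd_eq, Finset.mem_filter, Finset.mem_image, Finset.mem_univ, true_and]
      constructor
      · rintro ⟨⟨x, rfl⟩, hu, hv⟩
        exact ⟨x, ⟨((mem_fE x u).mp hu).symm, ((mem_fE x v).mp hv).symm⟩, rfl⟩
      · rintro ⟨x, ⟨hu, hv⟩, rfl⟩
        exact ⟨⟨x, rfl⟩, (mem_fE x u).mpr hu.symm, (mem_fE x v).mpr hv.symm⟩
    rw [hset, Finset.card_image_of_injective _ hinj]
    rw [Finset.card_le_one]
    intro x hx y hy
    simp only [Finset.mem_filter, Finset.mem_univ, true_and] at hx hy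
    rcases eq_or_ne u.1 v.1 with h1 | h1
    · exfalso
      apply huv
      have : u.2 = v.2 := by rw [← hx.1, ← hx.2, h1]
      exact Prod.ext h1 this
    · have h1 : u.1.val ≠ v.1.val := fun h => h1 (Fin.ext h)
      rcases Nat.lt_or_gt_of_ne h1 with hlt | hlt
      · exact crd_inj hd hrd hlt (hx.1.trans hy.1.symm) (hx.2.trans hy.2.symm)
      · exact crd_inj hd hrd hlt (hx.2.trans hy.2.symm) (hx.1.trans hy.1.symm)
end

section
/- For the tripartite hypergraph K on 3d² vertices defined by parts A, B, C each of size d² and hyperedges {a_{kd+i}, b_{kd+j}, c_{id+j}} for 0 ≤ k ≤ d−1, 1 ≤ i,j ≤ d, the number of strong independent sets satisfies i_2(K) ≥ (2^{d+1} − 1)^d, and hence log₂ i_2(K)/(3d²) ≥ 1/3 + 1/(6d) − o(1/d). -/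
open Filter

/-- The tripartite hypergraph `K` on `3d²` vertices: parts `A`, `B`, `C` (indexed by
`Fin 3`), each indexed by pairs in `Fin d × Fin d` (the pair `(k, i)` encodes the
index `k·d + i`), with hyperedges `{a_{(k,i)}, b_{(k,j)}, c_{(i,j)}}` for all
`k, i, j`. -/
def Kedges (d : ℕ) : Finset (Finset (Fin 3 × Fin d × Fin d)) :=
  (Finset.univ : Finset (Fin d × Fin d × Fin d)).image
    (fun t => {(0, (t.1, t.2.1)), (1, (t.1, t.2.2)), (2, (t.2.1, t.2.2))})

/-- The number of strong independent sets of `K`. -/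
def Kcount (d : ℕ) : ℕ :=
  ((Finset.univ : Finset (Finset (Fin 3 × Fin d × Fin d))).filter
    (fun I => ∀ e ∈ Kedges d, (I ∩ e).card ≤ 1)).card

abbrev Kside (d : ℕ) := Finset (Fin d) ⊕ {s : Finset (Fin d) // s ≠ ∅}

def Kpred (d : ℕ) (g : Fin d → Kside d) (v : Fin 3 × Fin d × Fin d) : Bool :=
  match g v.2.1 with
  | .inl s => v.1 = 0 ∧ v.2.2 ∈ s
  | .inr s => v.1 = 1 ∧ v.2.2 ∈ s.1

def Kmap (d : ℕ) (g : Fin d → Kside d) : Finset (Fin 3 × Fin d × Fin d) :=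
  Finset.univ.filter (fun v => Kpred d g v)

lemma card_Kside (d : ℕ) : Fintype.card (Kside d) = 2 ^ (d + 1) - 1 := by
  have h1 : Fintype.card {s : Finset (Fin d) // s ≠ ∅} = 2 ^ d - 1 := by
    have := Fintype.card_subtype_compl (α := Finset (Fin d)) (p := fun s => s = ∅)
    simp [Fintype.card_subtype_eq] at this
    simpa using this
  have h2 : 1 ≤ 2 ^ d := Nat.one_le_two_pow
  simp only [Fintype.card_sum, h1, Fintype.card_finset, Fintype.card_fin, pow_succ]
  omega

lemma Kcount_ge (d : ℕ) : (2 ^ (d + 1) - 1) ^ d ≤ Kcount d := by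
  classical
  have hinj : Function.Injective (Kmap d) := by
    intro g g' h
    funext k
    have hmem : ∀ v, Kpred d g v ↔ Kpred d g' v := by
      intro v
      have := Finset.ext_iff.mp h v
      simpa [Kmap, Finset.mem_filter] using this
    rcases hg : g k with s | s <;> rcases hg' : g' k with s' | s'
    · congr 1
      ext i
      have := hmem (0, k, i)
      simp [Kpred, hg, hg'] at this
      simpa using this
    · exfalso
      obtain ⟨j, hj⟩ := Finset.nonempty_iff_ne_empty.mpr s'.2
      have := (hmem (1, k, j)).mpr
      simp [Kpred, hg, hg'] at this
      exact this hj
    · exfalso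
      obtain ⟨j, hj⟩ := Finset.nonempty_iff_ne_empty.mpr s.2
      have := (hmem (1, k, j)).mp
      simp [Kpred, hg, hg'] at this
      exact this hj
    · congr 1
      exact Subtype.ext (Finset.ext fun i => by
        have := hmem (1, k, i); simp [Kpred, hg, hg'] at this; simpa using this)
  have hmaps : ∀ g, Kmap d g ∈
      ((Finset.univ : Finset (Finset (Fin 3 × Fin d × Fin d))).filter
        (fun I => ∀ e ∈ Kedges d, (I ∩ e).card ≤ 1)) := by
    intro g
    simp only [Finset.mem_filter, Finset.mem_univ, true_and]
    intro e he
    simp only [Kedges, Finset.mem_image, Finset.mem_univ, true_and] at he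
    obtain ⟨⟨k, i, j⟩, rfl⟩ := he
    apply Finset.card_le_one.mpr
    intro a ha b hb
    simp only [Finset.mem_inter, Kmap, Finset.mem_filter, Finset.mem_univ, true_and,
      Finset.mem_insert, Finset.mem_singleton] at ha hb
    obtain ⟨hpa, ha⟩ := ha
    obtain ⟨hpb, hb⟩ := hb
    have hC : ∀ c : Fin 3 × Fin d × Fin d, c.1 = 2 → ¬ (Kpred d g c = true) := by
      intro c hc2
      rcases hgc : g c.2.1 with t | t <;> simp [Kpred, hgc, hc2]
    rcases hg : g k with s | s
    · have key : ∀ c, Kpred d g c = true →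
          (c = ((0 : Fin 3),(k,i)) ∨ c = ((1 : Fin 3),(k,j)) ∨ c = ((2 : Fin 3),(i,j))) →
          c = ((0 : Fin 3), (k, i)) := by
        intro c hc hcases
        rcases hcases with rfl | rfl | rfl
        · rfl
        · simp [Kpred, hg] at hc
        · exact absurd hc (hC _ rfl)
      rw [key a hpa ha, key b hpb hb]
    · have key : ∀ c, Kpred d g c = true →
          (c = ((0 : Fin 3),(k,i)) ∨ c = ((1 : Fin 3),(k,j)) ∨ c = ((2 : Fin 3),(i,j))) →
          c = ((1 : Fin 3), (k, j)) := by
        intro c hc hcases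
        rcases hcases with rfl | rfl | rfl
        · simp [Kpred, hg] at hc
        · rfl
        · exact absurd hc (hC _ rfl)
      rw [key a hpa ha, key b hpb hb]
  have hle := Finset.card_le_card_of_injOn (f := Kmap d)
      (s := (Finset.univ : Finset (Fin d → Kside d)))
      (fun g _ => hmaps g) (hinj.injOn)
  rw [Finset.card_univ, Fintype.card_fun, card_Kside] at hle
  simpa [Kcount] using hle

theorem stmt_17 :
    (∀ d : ℕ, 2 ≤ d → (Kcount d : ℝ) ≥ ((2 : ℝ) ^ (d + 1) - 1) ^ d) ∧
    ∃ f : ℕ → ℝ, f =o[atTop] (fun d : ℕ => 1 / (d : ℝ)) ∧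
      ∀ d : ℕ, 2 ≤ d →
        Real.logb 2 (Kcount d) / (3 * (d : ℝ) ^ 2) ≥
          1 / 3 + 1 / (6 * (d : ℝ)) - f d := by
  have hmain : ∀ d : ℕ, 2 ≤ d → (Kcount d : ℝ) ≥ ((2 : ℝ) ^ (d + 1) - 1) ^ d := by
    intro d _
    have h := Kcount_ge d
    have h2 : (1:ℕ) ≤ 2 ^ (d+1) := Nat.one_le_two_pow
    have e : ((2:ℝ) ^ (d+1) - 1) ^ d = (((2 ^ (d+1) - 1 : ℕ) : ℝ)) ^ d := by
      rw [Nat.cast_sub h2]; push_cast; ring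
    rw [ge_iff_le, e]
    exact_mod_cast h
  refine ⟨hmain, fun _ => 0, ?_, ?_⟩
  · exact Asymptotics.isLittleO_zero _ _
  · intro d hd
    have hd0 : (0:ℝ) < d := by exact_mod_cast lt_of_lt_of_le two_pos hd
    simp only [sub_zero, ge_iff_le]
    -- key exponent bound : 2^((d:ℝ)+1/2) ≤ 2^(d+1) - 1
    have h8 : (8:ℝ) ≤ 2 ^ (d+1) := by
      calc (8:ℝ) = 2 ^ 3 := by norm_num
        _ ≤ 2 ^ (d+1) := by
          apply pow_le_pow_right₀ (by norm_num); omega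
    have hsqrt : (4/3 : ℝ) ≤ Real.sqrt 2 := by
      rw [show (4/3:ℝ) = Real.sqrt ((4/3)^2) by rw [Real.sqrt_sq (by norm_num)]]
      apply Real.sqrt_le_sqrt; norm_num
    have hrhalf : (2:ℝ) ^ (-(1/2) : ℝ) ≤ 3/4 := by
      rw [Real.rpow_neg (by norm_num), ← Real.sqrt_eq_rpow]
      calc (Real.sqrt 2)⁻¹ ≤ ((4:ℝ)/3)⁻¹ := inv_anti₀ (by norm_num) hsqrt
        _ = 3/4 := by norm_num
    have hkey : (2:ℝ) ^ ((d:ℝ) + 1/2) ≤ (2:ℝ) ^ (d+1) - 1 := by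
      have e1 : (2:ℝ) ^ ((d:ℝ) + 1/2) = (2:ℝ)^(d+1) * (2:ℝ) ^ (-(1/2):ℝ) := by
        rw [← Real.rpow_natCast 2 (d+1), ← Real.rpow_add (by norm_num)]
        push_cast; ring_nf
      rw [e1]
      nlinarith [Real.rpow_pos_of_pos (show (0:ℝ)<2 by norm_num) (-(1/2):ℝ)]
    have hpow : (2:ℝ) ^ (((d:ℝ) + 1/2) * d) ≤ ((2:ℝ) ^ (d+1) - 1) ^ d := by
      rw [show (((d:ℝ)+1/2) * d) = ((d:ℝ)+1/2) * (d:ℕ) by push_cast; ring,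
        Real.rpow_mul (by norm_num), Real.rpow_natCast]
      exact pow_le_pow_left₀ (Real.rpow_nonneg (by norm_num) _) hkey d
    have hlogb : ((d:ℝ) + 1/2) * d ≤ Real.logb 2 (Kcount d) := by
      have h1 : (2:ℝ) ^ (((d:ℝ) + 1/2) * d) ≤ (Kcount d : ℝ) :=
        hpow.trans (hmain d hd)
      calc ((d:ℝ) + 1/2) * d = Real.logb 2 ((2:ℝ) ^ (((d:ℝ) + 1/2) * d)) := by
            rw [Real.logb_rpow (by norm_num) (by norm_num)]
        _ ≤ Real.logb 2 (Kcount d) :=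
            Real.logb_le_logb_of_le (by norm_num) (by positivity) h1
    have e2 : (((d:ℝ) + 1/2) * d) / (3 * (d:ℝ)^2) = 1/3 + 1/(6*(d:ℝ)) := by
      field_simp; ring
    calc 1/3 + 1/(6*(d:ℝ)) = (((d:ℝ) + 1/2) * d) / (3 * (d:ℝ)^2) := e2.symm
      _ ≤ Real.logb 2 (Kcount d) / (3 * (d:ℝ)^2) := by gcongr
end
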